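/- Let m ≥ 1, u ≥ 1, j, j' be integers with 0 ≤ j ≤ m, 0 ≤ j' ≤ um, and j' ≡ j (mod 2). Then φ(m,j,−(j'+j)/2 − 1) = φ(m,j,(j'−j)/2) if and only if m > 1 and j' ≤ j − 2. -/
import Mathlib


/-- The δ-coefficient function `φ(m,j,k)` for type `A₁⁽¹⁾`: writing `k = m*q + r` by
Euclidean division (`0 ≤ r < m` when `1 ≤ m`), set `φ(m,j,k) = -q*(k+r+j) - r` if
`0 ≤ r ≤ m - j`, and `φ(m,j,k) = -q*(k+r+j) + m - j - 2*r` if `m - j ≤ r < m`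
(the two expressions agree at `r = m - j`). -/
def phi (m j k : ℤ) : ℤ :=
  -(k.ediv m) * (k + k.emod m + j) +
    (if k.emod m ≤ m - j then -(k.emod m) else m - j - 2 * (k.emod m))

lemma phi_eval (m j q r : ℤ) (h0 : 0 ≤ r) (h1 : r < m) :
    phi m j (m * q + r) = -q * ((m * q + r) + r + j) +
      (if r ≤ m - j then -r else m - j - 2 * r) := by
  have hdiv : (m * q + r).ediv m = q := by
    show (m * q + r) / m = q
    rw [add_comm, Int.add_mul_ediv_left r q (by omega), Int.ediv_eq_zero_of_lt h0 h1, zero_add]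
  have hmod : (m * q + r).emod m = r := by
    show (m * q + r) % m = r
    rw [add_comm, Int.add_mul_emod_self_left, Int.emod_eq_of_lt h0 h1]
  rw [phi, hdiv, hmod]

/-- For `m, u ≥ 1`, `0 ≤ j ≤ m`, `0 ≤ j' ≤ um`, `j' ≡ j (mod 2)`:
`φ(m,j,−(j'+j)/2 − 1) = φ(m,j,(j'−j)/2)` iff `m > 1` and `j' ≤ j − 2`. -/
theorem phi_equality_iff_A1 (m u j j' : ℤ) (hm : 1 ≤ m) (hu : 1 ≤ u)
    (hj0 : 0 ≤ j) (hjm : j ≤ m) (hj'0 : 0 ≤ j') (hj'um : j' ≤ u * m)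
    (hpar : 2 ∣ j' - j) :
    phi m j (-((j' + j) / 2) - 1) = phi m j ((j' - j) / 2) ↔ 1 < m ∧ j' ≤ j - 2 := by
  obtain ⟨b, hb⟩ := hpar
  obtain ⟨q, r, hbqr, hr0, hrm⟩ : ∃ q r, b = m * q + r ∧ 0 ≤ r ∧ r < m :=
    ⟨b / m, b % m, (Int.mul_ediv_add_emod b m).symm, Int.emod_nonneg b (by omega),
      Int.emod_lt_of_pos b (by omega)⟩
  have hj'e : j' = j + 2 * (m * q + r) := by rw [← hbqr]; omega
  have hk2 : (j' - j) / 2 = m * q + r := by omega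
  subst hj'e
  rw [hk2]
  by_cases hc : r + j + 1 ≤ m
  · -- case A: r ≤ m - j - 1
    have hk1 : -((j + 2 * (m * q + r) + j) / 2) - 1 = m * (-q - 1) + (m - r - j - 1) := by
      have h2 : (j + 2 * (m * q + r) + j) / 2 = j + (m * q + r) := by omega
      rw [h2]; ring
    rw [hk1, phi_eval m j (-q - 1) (m - r - j - 1) (by omega) (by omega),
      phi_eval m j q r hr0 hrm, if_pos (by omega : m - r - j - 1 ≤ m - j),
      if_pos (by omega : r ≤ m - j)]
    constructor
    · intro h
      exfalso
      have : 2 * q + 1 = 0 := by linear_combination -h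
      omega
    · rintro ⟨hm1, hle⟩
      exfalso
      have ht : m * q + r ≤ -1 := by linarith
      have hq1 : q ≤ -1 := by
        by_contra h'
        push_neg at h'
        have : 0 ≤ m * q := mul_nonneg (by omega) (by omega)
        omega
      have : m * q ≤ m * (-1) := mul_le_mul_of_nonneg_left hq1 (by omega)
      omega
  · -- case B: r ≥ m - j
    have hk1 : -((j + 2 * (m * q + r) + j) / 2) - 1 = m * (-q - 2) + (2 * m - r - j - 1) := by
      have h2 : (j + 2 * (m * q + r) + j) / 2 = j + (m * q + r) := by omega
      rw [h2]; ring
    rw [hk1, phi_eval m j (-q - 2) (2 * m - r - j - 1) (by omega) (by omega),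
      phi_eval m j q r hr0 hrm,
      show (if 2 * m - r - j - 1 ≤ m - j then -(2 * m - r - j - 1)
          else m - j - 2 * (2 * m - r - j - 1)) = m - j - 2 * (2 * m - r - j - 1) from by
        split_ifs <;> omega,
      show (if r ≤ m - j then -r else m - j - 2 * r) = m - j - 2 * r from by
        split_ifs <;> omega]
    constructor
    · intro h
      have hq1 : 2 * q + 2 = 0 := by linear_combination -h
      have hq2 : q = -1 := by omega
      subst hq2
      have : m * (-1) = -m := by ring
      omega
    · rintro ⟨hm1, hle⟩
      have ht : m * q + r ≤ -1 := by linarith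
      have hq1 : q ≤ -1 := by
        by_contra h'
        push_neg at h'
        have : 0 ≤ m * q := mul_nonneg (by omega) (by omega)
        omega
      have hq2 : -1 ≤ q := by
        by_contra h'
        push_neg at h'
        have h'' : q ≤ -2 := by omega
        have : m * q ≤ m * (-2) := mul_le_mul_of_nonneg_left h'' (by omega)
        have hj'0' : 0 ≤ j + 2 * (m * q + r) := hj'0
        omega
      have hq3 : q = -1 := le_antisymm hq1 hq2
      linear_combination -2 * hq3
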